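/- Let L_2 : ℤ[x^{±1}, v^{±2}] → ℤ[v^{±1}] be the ℤ[v^{±2}]-linear map sending x^a to v^{-a²}, with q = v². Then for every nonnegative integer k, L_2((x;q)_{k+1}(x^{-1};q)_{k+1}) = 2·(-1)^{k+1}·v^{-k-1}·(1-v)·(-v²;-v)_{2k}. -/

import Mathlib

open LaurentPolynomial Finset

/-- The ring `ℤ[v^{±1}]` of Laurent polynomials in `v`. -/
noncomputable abbrev Rv := LaurentPolynomial ℤ

/-- The `ℤ[v^{±2}]`-linear "Laplace transform" on `ℤ[x^{±1}, v^{±2}]`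
(modeled as Laurent polynomials in `x` over `ℤ[v^{±1}]`), sending `x^a ↦ g a`. -/
noncomputable def Lap (g : ℤ → Rv) (f : LaurentPolynomial Rv) : Rv :=
  Finsupp.sum f.coeff fun a c => c * g a

namespace LTwo

noncomputable section

abbrev P := LaurentPolynomial Rv

lemma Tm {R : Type*} [Semiring R] (a b : ℤ) :
    (T a : LaurentPolynomial R) * T b = T (a + b) := (T_add a b).symm

lemma lap_add (g : ℤ → Rv) (f h : P) : Lap g (f + h) = Lap g f + Lap g h := by
  show Finsupp.sum (f.coeff + h.coeff) (fun a c => c * g a) = _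
  exact Finsupp.sum_add_index' (fun _ => zero_mul _) (fun _ b c => add_mul b c _)

lemma lap_single (g : ℤ → Rv) (c : Rv) (n : ℤ) : Lap g (C c * T n) = c * g n := by
  rw [← single_eq_C_mul_T]
  show Finsupp.sum (Finsupp.single n c) (fun a c => c * g a) = _
  exact Finsupp.sum_single_index (zero_mul _)

lemma lap_C_mul (g : ℤ → Rv) (c : Rv) (f : P) : Lap g (C c * f) = c * Lap g f := by
  induction f using LaurentPolynomial.induction_on' with
  | add p q hp hq => rw [mul_add, lap_add, lap_add, hp, hq, mul_add]
  | C_mul_T n a => rw [← mul_assoc, ← map_mul, lap_single, lap_single, mul_assoc]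

lemma lap_neg (g : ℤ → Rv) (f : P) : Lap g (-f) = -Lap g f := by
  have h0 : Lap g 0 = 0 := by
    show Finsupp.sum (0 : ℤ →₀ Rv) (fun a c => c * g a) = 0
    exact Finsupp.sum_zero_index
  have h := lap_add g f (-f)
  rw [add_neg_cancel, h0] at h
  exact (neg_eq_of_add_eq_zero_right h.symm).symm


lemma CT_mul (a b : Rv) (m n : ℤ) :
    (C a * T m) * (C b * T n) = C (a * b) * (T (m + n) : P) := by
  rw [mul_mul_mul_comm, ← map_mul, Tm]

def uSig : Pˣ where
  val := C (T 2) * T 1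
  inv := C (T (-2)) * T (-1)
  val_inv := by
    rw [CT_mul, Tm, show ((2:ℤ) + -2) = 0 by decide, show ((1:ℤ) + -1) = 0 by decide,
      T_zero, map_one, one_mul, T_zero]
  inv_val := by
    rw [CT_mul, Tm, show ((-2:ℤ) + 2) = 0 by decide, show ((-1:ℤ) + 1) = 0 by decide,
      T_zero, map_one, one_mul, T_zero]

def uIot : Pˣ where
  val := T (-1)
  inv := T 1
  val_inv := by rw [Tm, show ((-1:ℤ) + 1) = 0 by decide, T_zero]
  inv_val := by rw [Tm, show ((1:ℤ) + -1) = 0 by decide, T_zero]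

lemma uSig_zpow (n : ℤ) : ((uSig ^ n : Pˣ) : P) = C (T (2 * n)) * T n := by
  induction n using Int.induction_on with
  | zero => simp
  | succ k ih =>
      rw [zpow_add_one, Units.val_mul, ih]
      show _ * (C (T 2) * T 1) = _
      rw [CT_mul, Tm, show 2 * (k:ℤ) + 2 = 2 * ((k:ℤ) + 1) by ring]
  | pred k ih =>
      rw [zpow_sub_one, Units.val_mul, ih]
      show _ * (C (T (-2)) * T (-1)) = _
      rw [CT_mul, Tm, show 2 * (-(k:ℤ)) + -2 = 2 * (-(k:ℤ) - 1) by ring,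
        show (-(k:ℤ)) + -1 = -(k:ℤ) - 1 by ring]

lemma uIot_zpow (n : ℤ) : ((uIot ^ n : Pˣ) : P) = T (-n) := by
  induction n using Int.induction_on with
  | zero => simp
  | succ k ih =>
      rw [zpow_add_one, Units.val_mul, ih]
      show _ * (T (-1) : P) = _
      rw [Tm, show (-(k:ℤ)) + -1 = -((k:ℤ)+1) by ring]
  | pred k ih =>
      rw [zpow_sub_one, Units.val_mul, ih]
      show _ * (T 1 : P) = _
      rw [Tm, show -(-(k:ℤ)) + 1 = -(-(k:ℤ) - 1) by ring]

def homOfUnit (u : Pˣ) : P →ₐ[Rv] P :=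
  AddMonoidAlgebra.lift Rv P ℤ ((Units.coeHom P).comp (zpowersHom Pˣ u))

lemma homOfUnit_single (u : Pˣ) (n : ℤ) (c : Rv) :
    homOfUnit u (C c * T n) = C c * ((u ^ n : Pˣ) : P) := by
  rw [← single_eq_C_mul_T, homOfUnit, AddMonoidAlgebra.lift_single, Algebra.smul_def]
  rfl


def sig : P →ₐ[Rv] P := homOfUnit uSig
def iot : P →ₐ[Rv] P := homOfUnit uIot

lemma sig_CT (c : Rv) (n : ℤ) : sig (C c * T n) = C (c * T (2 * n)) * T n := by
  rw [sig, homOfUnit_single, uSig_zpow, ← mul_assoc, ← map_mul]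

lemma iot_CT (c : Rv) (n : ℤ) : iot (C c * T n) = C c * T (-n) := by
  rw [iot, homOfUnit_single, uIot_zpow]

lemma sig_C (c : Rv) : sig (C c) = C c := by
  have h := sig_CT c 0
  rw [mul_zero, T_zero, mul_one, mul_one, T_zero, mul_one] at h
  exact h

lemma iot_C (c : Rv) : iot (C c) = C c := by
  have h := iot_CT c 0
  rw [neg_zero, T_zero, mul_one] at h
  exact h

lemma sig_T (n : ℤ) : sig (T n) = C (T (2 * n)) * T n := by
  have h := sig_CT 1 n
  rw [one_mul, map_one, one_mul] at h
  exact h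

lemma iot_T (n : ℤ) : iot (T n) = T (-n) := by
  have h := iot_CT 1 n
  rw [map_one, one_mul, one_mul] at h
  exact h

def Lw : ℤ → Rv := fun a => T (-a ^ 2)

lemma lap_shift (f : P) : Lap Lw (T 1 * sig f) = T (-1) * Lap Lw f := by
  induction f using LaurentPolynomial.induction_on' with
  | add p q hp hq => rw [map_add, mul_add, lap_add, lap_add, hp, hq, mul_add]
  | C_mul_T n a =>
      rw [sig_CT, lap_single, show (T 1 : P) * (C (a * T (2 * n)) * T n)
          = C (a * T (2 * n)) * T (n + 1) by rw [mul_left_comm, Tm, add_comm], lap_single]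
      show a * T (2 * n) * T (-(n + 1) ^ 2) = T (-1) * (a * T (-n ^ 2))
      rw [mul_assoc, Tm, mul_left_comm, Tm, show 2 * n + -(n + 1) ^ 2 = -1 + -n ^ 2 by ring]

lemma lap_iot (f : P) : Lap Lw (iot f) = Lap Lw f := by
  induction f using LaurentPolynomial.induction_on' with
  | add p q hp hq => rw [map_add, lap_add, lap_add, hp, hq]
  | C_mul_T n a =>
      rw [iot_CT, lap_single, lap_single]
      show a * T (-(-n) ^ 2) = a * T (-n ^ 2)
      rw [show (-n) ^ 2 = n ^ 2 by ring]


def A (n : ℕ) : P := ∏ i ∈ Finset.range n, (1 - T 1 * C (T 2 ^ i))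

def B (m : ℕ) : P := ∏ i ∈ Finset.range m, (1 - T (-1) * C (T 2 ^ (i + 1)))

def Aw (j : ℤ) (n : ℕ) : P := ∏ i ∈ Finset.range n, (1 - T 1 * C (T (2 * j - 2 * i)))

lemma T2pow (i : ℕ) : (T 2 ^ i : Rv) = T (2 * i) := by
  rw [T_pow, mul_comm]

lemma sig_factor (c : Rv) : sig (1 - T 1 * C c) = 1 - T 1 * C (c * T 2) := by
  rw [map_sub, map_one, mul_comm (T 1 : P) (C c), sig_CT, mul_one, mul_comm]

lemma iot_factor (c : Rv) : iot (1 - T 1 * C c) = 1 - T (-1) * C c := by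
  rw [map_sub, map_one, mul_comm (T 1 : P) (C c), iot_CT, mul_comm]

lemma sig_A (n : ℕ) : sig (A n) * (1 - T 1) = A (n + 1) := by
  rw [A, A, map_prod, Finset.prod_range_succ']
  congr 1
  · exact Finset.prod_congr rfl fun i _ => by
      rw [sig_factor, ← pow_succ]
  · rw [pow_zero, map_one, mul_one]

lemma sig_B (m : ℕ) : sig (B (m + 1)) = B m * (1 - T (-1)) := by
  rw [B, map_prod]
  have h : ∀ i ∈ Finset.range (m + 1),
      sig (1 - T (-1) * C (T 2 ^ (i + 1))) = 1 - T (-1) * C (T (2 * i)) := by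
    intro i _
    rw [map_sub, map_one, mul_comm ((T (-1)) : P) (C (T 2 ^ (i + 1))), sig_CT, T2pow, Tm,
      mul_comm]
    push_cast
    rw [show 2 * ((i : ℤ) + 1) + -2 = 2 * i by ring]
  rw [Finset.prod_congr rfl h, Finset.prod_range_succ']
  refine congrArg₂ (· * ·) ?_ ?_
  · rw [B]
    exact Finset.prod_congr rfl fun i _ => by rw [T2pow]
  · norm_num

lemma sig_Aw (j : ℤ) (n : ℕ) : sig (Aw j n) = Aw (j + 1) n := by
  rw [Aw, Aw, map_prod]
  exact Finset.prod_congr rfl fun i _ => by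
    rw [sig_factor, Tm, show 2 * j - 2 * i + 2 = 2 * (j + 1) - 2 * i by ring]


lemma lap_T (n : ℤ) : Lap Lw (T n) = T (-n ^ 2) := by
  have h := lap_single Lw 1 n
  rw [map_one, one_mul, one_mul] at h
  exact h

lemma lap_one : Lap Lw 1 = 1 := by
  have h := lap_T 0
  rw [T_zero] at h
  rw [h]
  norm_num

lemma one_sub_TnegOne : (T 1 : P) * (1 - T (-1)) = -(1 - T 1) := by
  rw [mul_sub, mul_one, Tm, show (1:ℤ) + -1 = 0 by decide, T_zero]
  ring

lemma T_mul_T_cancel : (T 1 : Rv) * T (-1) = 1 := by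
  rw [Tm, show (1:ℤ) + -1 = 0 by decide, T_zero]

lemma unT (x : Rv) : T 1 * (T (-1) * x) = x := by
  rw [← mul_assoc, T_mul_T_cancel, one_mul]

lemma ladderI_step (s : ℤ) (n m : ℕ) :
    Lap Lw (T s * (A n * B (m + 1))) = -T (2 * s + 1) * Lap Lw (T s * (A (n + 1) * B m)) := by
  have key : (T 1 : P) * sig (T s * (A n * B (m + 1)))
      = -(C (T (2 * s)) * (T s * (A (n + 1) * B m))) := by
    rw [map_mul, map_mul, sig_T, sig_B, ← sig_A n]
    linear_combination (C (T (2 * s)) * T s * sig (A n) * B m : P) * one_sub_TnegOne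
  have h := lap_shift (T s * (A n * B (m + 1)))
  rw [key, lap_neg, lap_C_mul] at h
  calc Lap Lw (T s * (A n * B (m + 1)))
      = T 1 * (T (-1) * Lap Lw (T s * (A n * B (m + 1)))) := (unT _).symm
    _ = T 1 * -(T (2 * s) * Lap Lw (T s * (A (n + 1) * B m))) := by rw [← h]
    _ = -T (2 * s + 1) * Lap Lw (T s * (A (n + 1) * B m)) := by
        rw [mul_neg, ← mul_assoc, Tm, show (1:ℤ) + 2 * s = 2 * s + 1 by ring, neg_mul]

lemma ladderI (s : ℤ) : ∀ (m n : ℕ),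
    Lap Lw (T s * (A n * B m)) = (-T (2 * s + 1)) ^ m * Lap Lw (T s * A (n + m))
  | 0, n => by rw [B, Finset.prod_range_zero, mul_one, pow_zero, one_mul, Nat.add_zero]
  | (m + 1), n => by
      rw [ladderI_step, ladderI s m (n + 1), pow_succ', mul_assoc,
        show n + 1 + m = n + (m + 1) by omega]

lemma ladderE (n : ℕ) : ∀ (r : ℕ) (j : ℤ),
    Lap Lw (T (-(r : ℤ)) * Aw j n) = T (-(r : ℤ) ^ 2) * Lap Lw (Aw (j + r) n)
  | 0, j => by norm_num
  | (r + 1), j => by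
      have key : (T 1 : P) * sig (T (-((r : ℤ) + 1)) * Aw j n)
          = C (T (2 * (-((r : ℤ) + 1)))) * (T (-(r : ℤ)) * Aw (j + 1) n) := by
        rw [map_mul, sig_T, sig_Aw, show -(r:ℤ) = -((r:ℤ) + 1) + 1 by ring, T_add]
        ring
      have h := lap_shift (T (-((r : ℤ) + 1)) * Aw j n)
      rw [key, lap_C_mul, ladderE n r (j + 1)] at h
      push_cast
      rw [← unT (Lap Lw (T (-((r:ℤ) + 1)) * Aw j n)), ← h, ← mul_assoc, Tm, ← mul_assoc, Tm,
        show (1:ℤ) + 2 * -((r:ℤ) + 1) + -(r:ℤ)^2 = -((r:ℤ)+1)^2 by ring,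
        show j + 1 + (r:ℤ) = j + ((r:ℤ) + 1) by ring]


lemma T_prod (f : ℕ → ℤ) : ∀ n : ℕ,
    (∏ i ∈ Finset.range n, (T (f i) : Rv)) = T (∑ i ∈ Finset.range n, f i)
  | 0 => by rw [Finset.prod_range_zero, Finset.sum_range_zero, T_zero]
  | (n + 1) => by
      rw [Finset.prod_range_succ, Finset.sum_range_succ, T_prod f n, Tm]

lemma sum2 : ∀ n : ℕ, (∑ i ∈ Finset.range n, 2 * (i : ℤ)) = n * (n - 1)
  | 0 => by norm_num
  | (n + 1) => by rw [Finset.sum_range_succ, sum2 n]; push_cast; ring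

lemma A_rev (n : ℕ) : A n
    = (-1) ^ n * (C (T ((n : ℤ) * ((n : ℤ) - 1))) * (T (n : ℤ) * iot (Aw 0 n))) := by
  have fac : ∀ i : ℕ, (1 - T 1 * C (T 2 ^ i) : P)
      = (-1 : P) * ((C (T (2 * (i : ℤ))) : P) * T 1)
          * iot (1 - T 1 * C (T (2 * 0 - 2 * (i : ℤ)))) := by
    intro i
    rw [iot_factor, T2pow]
    have h1 : (C (T (2 * (i:ℤ))) : P) * T 1 * (T (-1) * C (T (2 * 0 - 2 * (i:ℤ)))) = 1 := by
      rw [mul_comm ((T (-1)) : P) (C (T (2 * 0 - 2 * (i:ℤ)))), mul_mul_mul_comm, ← map_mul, Tm,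
        Tm, show 2 * (i:ℤ) + (2 * 0 - 2 * (i:ℤ)) = 0 by ring,
        show (1:ℤ) + -1 = 0 by decide, T_zero, T_zero, map_one, one_mul]
    linear_combination (-1 : P) * h1
  rw [A, Aw, map_prod, Finset.prod_congr rfl fun i _ => fac i]
  rw [Finset.prod_mul_distrib, Finset.prod_mul_distrib, Finset.prod_mul_distrib,
    Finset.prod_const, Finset.prod_const, ← map_prod, T_prod, sum2, T_pow, mul_one,
    Finset.card_range]
  ring


lemma Aw_A (n : ℕ) : Aw ((n : ℤ) - 1) n = A n := by
  rw [Aw, A, ← Finset.prod_range_reflect]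
  refine Finset.prod_congr rfl fun i hi => ?_
  have hi' : i < n := Finset.mem_range.mp hi
  rw [T2pow, show (2 * ((n:ℤ) - 1) - 2 * ((n - 1 - i : ℕ) : ℤ)) = 2 * (i:ℤ) by omega]

lemma neg_pow_P (n : ℕ) : ((-1 : P) ^ n) = C ((-1 : Rv) ^ n) := by
  rw [map_pow, map_neg, map_one]

lemma b_eq (n : ℕ) : Lap Lw (T (-1) * A n) = (-1) ^ n * T ((n : ℤ) - 1) * Lap Lw (A n) := by
  cases n with
  | zero =>
      rw [A, Finset.prod_range_zero, mul_one, lap_T, lap_one]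
      norm_num
  | succ m =>
      have hrev := A_rev (m + 1)
      have hTn : (T (-1) : P) * T ((m:ℤ) + 1) = iot (T (-(m : ℤ))) := by
        rw [iot_T, Tm, neg_neg]; congr 1; ring
      have step1 : (T (-1) : P) * A (m + 1)
          = C ((-1 : Rv) ^ (m + 1) * T (((m:ℤ) + 1) * ((m:ℤ) + 1 - 1)))
              * iot (T (-(m : ℤ)) * Aw 0 (m + 1)) := by
        rw [hrev, neg_pow_P, map_mul, map_mul, ← hTn]
        push_cast
        ring
      rw [step1, lap_C_mul, lap_iot, ladderE (m + 1) m 0, zero_add, ← Aw_A (m + 1),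
        show ((m + 1 : ℕ) : ℤ) - 1 = (m : ℤ) by push_cast; ring]
      have hT : (T (((m:ℤ) + 1) * ((m:ℤ) + 1 - 1)) : Rv) * T (-(m:ℤ) ^ 2) = T (m:ℤ) := by
        rw [Tm, show ((m:ℤ) + 1) * ((m:ℤ) + 1 - 1) + -(m:ℤ) ^ 2 = (m:ℤ) by ring]
      linear_combination ((-1 : Rv)) ^ (m + 1) * Lap Lw (Aw ((m:ℤ)) (m + 1)) * hT


lemma lap_sub (g : ℤ → Rv) (f h : P) : Lap g (f - h) = Lap g f - Lap g h := by
  rw [sub_eq_add_neg, lap_add, lap_neg, sub_eq_add_neg]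

lemma negT_pow (n : ℕ) : ((-T 1 : Rv)) ^ n = (-1) ^ n * T (n : ℤ) := by
  rw [neg_pow, T_pow, mul_one]

lemma g_closed : ∀ n : ℕ,
    Lap Lw (A n) = (-T (-1)) ^ n * ∏ i ∈ Finset.range n, (1 + (-T 1) ^ (i + 1))
  | 0 => by
      rw [A, Finset.prod_range_zero, lap_one, pow_zero, Finset.prod_range_zero, mul_one]
  | (n + 1) => by
      have h := ladderI 0 1 n
      rw [T_zero, one_mul, one_mul, pow_one, show 2 * (0:ℤ) + 1 = 1 by ring] at h
      have hB1 : B 1 = 1 - T (-1) * C (T 2 ^ 1) := by rw [B, Finset.prod_range_one]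
      have e2 : Lap Lw (A n * B 1) = Lap Lw (A n) - T 2 * Lap Lw (T (-1) * A n) := by
        rw [hB1, mul_sub, mul_one, lap_sub,
          show A n * (T (-1) * C (T 2 ^ 1)) = C (T 2) * (T (-1) * A n) by rw [pow_one]; ring,
          lap_C_mul]
      rw [e2, b_eq] at h
      have hpow : ((-T 1 : Rv)) ^ (n + 1) = (-1) ^ (n + 1) * T ((n : ℤ) + 1) := by
        rw [negT_pow]; push_cast; ring_nf
      have c1 : (T (-1) : Rv) * T 1 = 1 := by
        rw [Tm, show (-1:ℤ) + 1 = 0 by decide, T_zero]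
      have c2 : (T 2 : Rv) * T ((n:ℤ) - 1) = T ((n:ℤ) + 1) := by
        rw [Tm, show (2:ℤ) + ((n:ℤ) - 1) = (n:ℤ) + 1 by ring]
      have key : Lap Lw (A (n + 1)) = (-T (-1)) * (1 + (-T 1) ^ (n + 1)) * Lap Lw (A n) := by
        linear_combination (T (-1) : Rv) * h + (T (-1) * Lap Lw (A n)) * hpow
          + (-(Lap Lw (A (n + 1)))) * c1 + ((-1) ^ n * T (-1) * Lap Lw (A n)) * c2
      rw [key, g_closed n, Finset.prod_range_succ, pow_succ]
      ring

end

end LTwo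

open LTwo

/-- Lemma 5.2 (second formula): with `q = v²` and `L_2 : x^a ↦ v^{-a²}`,
`L_2((x;q)_{k+1}(x^{-1};q)_{k+1}) = 2 (-1)^{k+1} v^{-k-1} (1-v) (-v²;-v)_{2k}`. -/
theorem laplace_two (k : ℕ) :
    Lap (fun a => T (-a ^ 2))
        ((∏ i ∈ Finset.range (k + 1), (1 - T 1 * C (T 2 ^ i))) *
          ∏ i ∈ Finset.range (k + 1), (1 - T (-1) * C (T 2 ^ i))) =
      2 * (-1) ^ (k + 1) * T (-(k : ℤ) - 1) * (1 - T 1) *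
        ∏ i ∈ Finset.range (2 * k), (1 + (-T 1) ^ (i + 2)) := by
  show Lap Lw _ = _
  have hsp : (∏ i ∈ Finset.range (k + 1), (1 - T (-1) * C ((T 2 : Rv) ^ i)) : P)
      = B k * (1 - T (-1)) := by
    rw [Finset.prod_range_succ', pow_zero, map_one, mul_one, B]
  have hA : (∏ i ∈ Finset.range (k + 1), (1 - T 1 * C ((T 2 : Rv) ^ i)) : P) = A (k + 1) := rfl
  rw [hsp, hA,
    show A (k + 1) * (B k * (1 - T (-1)))
        = A (k + 1) * B k - T (-1) * (A (k + 1) * B k) by ring,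
    lap_sub]
  have t1 := ladderI 0 k (k + 1)
  rw [T_zero, one_mul, one_mul, show 2 * (0:ℤ) + 1 = 1 by ring,
    show k + 1 + k = 2 * k + 1 by omega] at t1
  have t2 := ladderI (-1) k (k + 1)
  rw [show 2 * (-1:ℤ) + 1 = -1 by ring, show k + 1 + k = 2 * k + 1 by omega] at t2
  rw [t1, t2, b_eq (2 * k + 1),
    show ((2 * k + 1 : ℕ) : ℤ) - 1 = 2 * (k : ℤ) by push_cast; ring]
  have hQ : (∏ i ∈ Finset.range (2 * k + 1), (1 + (-T 1 : Rv) ^ (i + 1)))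
      = (1 - T 1) * ∏ i ∈ Finset.range (2 * k), (1 + (-T 1) ^ (i + 2)) := by
    rw [Finset.prod_range_succ', mul_comm]
    congr 1
    · ring
  rw [g_closed (2 * k + 1), hQ]
  have p1 : (T (2 * (k:ℤ)) : Rv) = T 1 ^ (2 * k) := by
    rw [T_pow]; congr 1; push_cast; ring
  have p2 : (T (-(k:ℤ) - 1) : Rv) = T (-1) ^ (k + 1) := by
    rw [T_pow]; congr 1; push_cast; ring
  rw [p1, p2, neg_pow ((T 1) : Rv) k, neg_pow ((T (-1)) : Rv) (2 * k + 1),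
    neg_pow ((T (-1)) : Rv) k]
  have hxy : (T 1 : Rv) ^ k * (T (-1)) ^ k = 1 := by
    rw [← mul_pow, T_mul_T_cancel, one_pow]
  have hxy2 : (T 1 : Rv) ^ (2 * k) * (T (-1)) ^ (2 * k) = 1 := by
    rw [← mul_pow, T_mul_T_cancel, one_pow]
  rw [show ((-1 : Rv)) ^ (2 * k + 1) = -1 by rw [pow_succ, pow_mul]; norm_num,
    pow_succ ((-1 : Rv)) k]
  linear_combination (-(-1 : Rv) ^ k * ((1 - T 1) * ∏ i ∈ Finset.range (2 * k),
      (1 + (-T 1 : Rv) ^ (i + 2))) * (T (-1)) ^ (k + 1)) * hxy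
    + (-(-1 : Rv) ^ k * ((1 - T 1) * ∏ i ∈ Finset.range (2 * k),
      (1 + (-T 1 : Rv) ^ (i + 2))) * (T (-1)) ^ (k + 1)) * hxy2
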